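/- arXiv:2312.16785 — 3 statements merged into one kernel-verified Lean document; each statement's English description precedes it below -/
import Mathlib

section
/- Let g be a complex Lie algebra, n ⊆ g a subalgebra, ψ : n → ℂ a character, and V a g-module such that V = ⋃_{k≥0} V^{(k)} for the twisted n-action (i.e., V is locally ψ-nilpotent for n). If the space of Whittaker vectors Wh_ψ V is one-dimensional, spanned by a vector w that generates V as a U(g)-module, then V is a simple g-module. -/
attribute [local instance 100] LieRing.ofAssociativeRing

/-- The filtration step `V^{(k)}` for the twisted action of `n ⊆ g` on a `g`-module. -/
def twistFilt (g : Type*) [LieRing g] [LieAlgebra ℂ g] (n : LieSubalgebra ℂ g)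
    (ψ : n →ₗ⁅ℂ⁆ ℂ)
    (V : Type*) [AddCommGroup V] [Module ℂ V] [LieRingModule g V] [LieModule ℂ g V]
    (k : ℕ) : Set V :=
  {v : V | ∀ l : List n, l.length = k + 1 →
    l.foldr (fun (x : n) (w : V) => ⁅(x : g), w⁆ - ψ x • w) v = 0}

private lemma exists_whittaker_in_submodule
    (g : Type*) [LieRing g] [LieAlgebra ℂ g] (n : LieSubalgebra ℂ g) (ψ : n →ₗ⁅ℂ⁆ ℂ)
    (V : Type*) [AddCommGroup V] [Module ℂ V] [LieRingModule g V] [LieModule ℂ g V]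
    (N : LieSubmodule ℂ g V) :
    ∀ k : ℕ, ∀ v : V, v ∈ N → v ≠ 0 → v ∈ twistFilt g n ψ V k →
      ∃ u : V, u ∈ N ∧ u ≠ 0 ∧ ∀ x : n, ⁅(x : g), u⁆ = ψ x • u := by
  intro k
  induction k with
  | zero =>
    intro v hvN hv0 htw
    refine ⟨v, hvN, hv0, fun x => ?_⟩
    have := htw [x] rfl
    simp only [List.foldr_cons, List.foldr_nil] at this
    rw [sub_eq_zero] at this
    exact this
  | succ k ih =>
    intro v hvN hv0 htw
    by_cases h : ∀ x : n, ⁅(x : g), v⁆ = ψ x • v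
    · exact ⟨v, hvN, hv0, h⟩
    · push_neg at h
      obtain ⟨x, hx⟩ := h
      set v' : V := ⁅(x : g), v⁆ - ψ x • v with hv'
      have hv'0 : v' ≠ 0 := sub_ne_zero.mpr hx
      have hv'N : v' ∈ N := N.sub_mem (N.lie_mem hvN) (N.smul_mem _ hvN)
      have hv'tw : v' ∈ twistFilt g n ψ V k := by
        intro l hl
        have := htw (l ++ [x]) (by simp [hl])
        rwa [List.foldr_append] at this
      exact ih v' hv'N hv'0 hv'tw

/-- a locally ψ-nilpotent `g`-module generated by a spanning vector of its
1-dimensional space of Whittaker vectors is simple. -/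
theorem simple_of_whittaker_one_dimensional
    (g : Type*) [LieRing g] [LieAlgebra ℂ g] (n : LieSubalgebra ℂ g) (ψ : n →ₗ⁅ℂ⁆ ℂ)
    (V : Type*) [AddCommGroup V] [Module ℂ V] [LieRingModule g V] [LieModule ℂ g V]
    (hloc : ∀ v : V, ∃ k : ℕ, v ∈ twistFilt g n ψ V k)
    (w : V) (hw : w ≠ 0)
    (hwh : ∀ v : V, (∀ x : n, ⁅(x : g), v⁆ = ψ x • v) ↔ ∃ c : ℂ, v = c • w)
    (hgen : LieSubmodule.lieSpan ℂ g {w} = ⊤) :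
    Nontrivial V ∧ ∀ N : LieSubmodule ℂ g V, N = ⊥ ∨ N = ⊤ := by
  refine ⟨⟨w, 0, hw⟩, fun N => ?_⟩
  by_cases hN : N = ⊥
  · exact Or.inl hN
  · right
    obtain ⟨v, hvN, hv0⟩ : ∃ v : V, v ∈ N ∧ v ≠ 0 := by
      by_contra hcon
      push_neg at hcon
      exact hN ((LieSubmodule.eq_bot_iff N).mpr fun m hm => hcon m hm)
    obtain ⟨k, hk⟩ := hloc v
    obtain ⟨u, huN, hu0, huwh⟩ :=
      exists_whittaker_in_submodule g n ψ V N k v hvN hv0 hk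
    obtain ⟨c, hc⟩ := (hwh u).mp huwh
    have hc0 : c ≠ 0 := by
      rintro rfl
      simp at hc
      exact hu0 hc
    have hwN : w ∈ N := by
      have : c⁻¹ • u ∈ N := N.smul_mem _ huN
      rwa [hc, smul_smul, inv_mul_cancel₀ hc0, one_smul] at this
    have : LieSubmodule.lieSpan ℂ g {w} ≤ N :=
      LieSubmodule.lieSpan_le.mpr (by simpa using hwN)
    rw [hgen] at this
    exact top_le_iff.mp this
end

section
/- Let g be a complex Lie algebra, n ⊆ g a subalgebra, ψ : n → ℂ a character, and V a nonzero g-module lying in the twisted-nilpotent filtration V = ⋃_k V^{(k)}. Then every nonzero submodule of V contains a nonzero Whittaker vector of type ψ. In particular, if V ≠ 0 then Wh_ψ V ≠ 0. -/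
attribute [local instance 100] LieRing.ofAssociativeRing

/-- in a locally ψ-nilpotent `g`-module, every nonzero submodule contains a
nonzero Whittaker vector of type ψ; in particular if `V ≠ 0` then `Wh_ψ V ≠ 0`. -/
theorem nonzero_submodule_contains_whittaker
    (g : Type*) [LieRing g] [LieAlgebra ℂ g] (n : LieSubalgebra ℂ g) (ψ : n →ₗ⁅ℂ⁆ ℂ)
    (V : Type*) [AddCommGroup V] [Module ℂ V] [LieRingModule g V] [LieModule ℂ g V]
    (hloc : ∀ v : V, ∃ k : ℕ, v ∈ twistFilt g n ψ V k) :
    (∀ N : LieSubmodule ℂ g V, N ≠ ⊥ →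
      ∃ v ∈ N, v ≠ 0 ∧ ∀ x : n, ⁅(x : g), v⁆ = ψ x • v) ∧
    (Nontrivial V → ∃ v : V, v ≠ 0 ∧ ∀ x : n, ⁅(x : g), v⁆ = ψ x • v) := by
  have main : ∀ N : LieSubmodule ℂ g V, N ≠ ⊥ →
      ∃ v ∈ N, v ≠ 0 ∧ ∀ x : n, ⁅(x : g), v⁆ = ψ x • v := by
    intro N hN
    -- get a nonzero element of N
    obtain ⟨v, hvN, hv0⟩ : ∃ v ∈ N, v ≠ 0 := by
      by_contra h
      push_neg at h
      apply hN
      ext w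
      simp only [LieSubmodule.mem_bot]
      exact ⟨fun hw => h w hw, fun hw => hw ▸ N.zero_mem⟩
    obtain ⟨k, hk⟩ := hloc v
    clear hN
    induction k generalizing v with
    | zero =>
        refine ⟨v, hvN, hv0, fun x => ?_⟩
        have := hk [x] rfl
        simp only [List.foldr] at this
        exact sub_eq_zero.mp this
    | succ k ih =>
        by_cases h : ∀ x : n, ⁅(x : g), v⁆ = ψ x • v
        · exact ⟨v, hvN, hv0, h⟩
        · push_neg at h
          obtain ⟨x, hx⟩ := h
          set w := ⁅(x : g), v⁆ - ψ x • v with hw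
          have hw0 : w ≠ 0 := sub_ne_zero.mpr hx
          have hwN : w ∈ N := sub_mem (N.lie_mem hvN) (N.smul_mem _ hvN)
          have hwk : w ∈ twistFilt g n ψ V k := by
            intro l hl
            have := hk (l ++ [x]) (by simp [hl])
            simpa [List.foldr_append] using this
          exact ih w hwN hw0 hwk
  refine ⟨main, fun hV => ?_⟩
  obtain ⟨v, -, hv0, hwh⟩ := main ⊤ (by
    intro h
    obtain ⟨a, b, hab⟩ := hV
    have ha : a ∈ (⊥ : LieSubmodule ℂ g V) := h ▸ LieSubmodule.mem_top a
    have hb : b ∈ (⊥ : LieSubmodule ℂ g V) := h ▸ LieSubmodule.mem_top b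
    rw [LieSubmodule.mem_bot] at ha hb
    exact hab (ha.trans hb.symm))
  exact ⟨v, hv0, hwh⟩
end

section
/- Let g be a complex Lie algebra, n a subalgebra, ψ : n → ℂ a character, and V a g-module with V = ⋃_k V^{(k)} for the twisted n-action and V^{(0)} = Wh_ψ V one-dimensional. Then for every nonzero v ∈ V, the submodule U(g)·v contains V^{(0)}; i.e., the intersection U(g)v ∩ Wh_ψ V is nonzero. -/
attribute [local instance 100] LieRing.ofAssociativeRing

/-- if `V` is locally ψ-nilpotent and `Wh_ψ V = V^{(0)}` is one-dimensional,
then the submodule generated by any nonzero `v` contains `V^{(0)}`; in particular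
`U(g)v ∩ Wh_ψ V ≠ 0`. -/
theorem cyclic_contains_whittaker_line
    (g : Type*) [LieRing g] [LieAlgebra ℂ g] (n : LieSubalgebra ℂ g) (ψ : n →ₗ⁅ℂ⁆ ℂ)
    (V : Type*) [AddCommGroup V] [Module ℂ V] [LieRingModule g V] [LieModule ℂ g V]
    (hloc : ∀ v : V, ∃ k : ℕ, v ∈ twistFilt g n ψ V k)
    (w : V) (hw : w ≠ 0)
    (hwh : ∀ u : V, (∀ x : n, ⁅(x : g), u⁆ = ψ x • u) ↔ ∃ c : ℂ, u = c • w) :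
    ∀ v : V, v ≠ 0 →
      (∀ u ∈ twistFilt g n ψ V 0, u ∈ LieSubmodule.lieSpan ℂ g {v}) ∧
      (∃ u : V, u ≠ 0 ∧ (∀ x : n, ⁅(x : g), u⁆ = ψ x • u) ∧
        u ∈ LieSubmodule.lieSpan ℂ g {v}) := by
  have key : ∀ k : ℕ, ∀ v : V, v ≠ 0 → v ∈ twistFilt g n ψ V k →
      ∃ u : V, u ≠ 0 ∧ (∀ x : n, ⁅(x : g), u⁆ = ψ x • u) ∧
        u ∈ LieSubmodule.lieSpan ℂ g {v} := by
    intro k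
    induction k with
    | zero =>
      intro v hv hmem
      refine ⟨v, hv, fun x => ?_, LieSubmodule.subset_lieSpan rfl⟩
      have h := hmem [x] rfl
      simp only [List.foldr] at h
      exact sub_eq_zero.mp h
    | succ k ih =>
      intro v hv hmem
      by_cases hwv : ∀ x : n, ⁅(x : g), v⁆ = ψ x • v
      · exact ⟨v, hv, hwv, LieSubmodule.subset_lieSpan rfl⟩
      · push_neg at hwv
        obtain ⟨x, hx⟩ := hwv
        set v' : V := ⁅(x : g), v⁆ - ψ x • v with hv'def
        have hv' : v' ≠ 0 := sub_ne_zero.mpr hx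
        have hmem' : v' ∈ twistFilt g n ψ V k := by
          intro l hl
          have h := hmem (l ++ [x]) (by simp [hl])
          simpa [List.foldr_append] using h
        obtain ⟨u, hu0, huw, huspan⟩ := ih v' hv' hmem'
        refine ⟨u, hu0, huw, ?_⟩
        have hvs : v ∈ LieSubmodule.lieSpan ℂ g {v} := LieSubmodule.subset_lieSpan rfl
        have hv'span : v' ∈ LieSubmodule.lieSpan ℂ g {v} :=
          sub_mem (LieSubmodule.lie_mem _ hvs)
            ((LieSubmodule.lieSpan ℂ g {v}).smul_mem _ hvs)
        have hle : LieSubmodule.lieSpan ℂ g {v'} ≤ LieSubmodule.lieSpan ℂ g {v} :=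
          LieSubmodule.lieSpan_le.mpr (by simpa using hv'span)
        exact hle huspan
  intro v hv
  obtain ⟨k, hk⟩ := hloc v
  obtain ⟨u, hu0, huw, huspan⟩ := key k v hv hk
  obtain ⟨c, hc⟩ := (hwh u).mp huw
  have hc0 : c ≠ 0 := by
    rintro rfl
    rw [zero_smul] at hc
    exact hu0 hc
  have hwspan : w ∈ LieSubmodule.lieSpan ℂ g {v} := by
    rw [hc] at huspan
    have h2 := (LieSubmodule.lieSpan ℂ g {v}).smul_mem c⁻¹ huspan
    rwa [smul_smul, inv_mul_cancel₀ hc0, one_smul] at h2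
  constructor
  · intro u' hu'
    have hwh' : ∀ x : n, ⁅(x : g), u'⁆ = ψ x • u' := fun x => by
      have h := hu' [x] rfl
      simp only [List.foldr] at h
      exact sub_eq_zero.mp h
    obtain ⟨c', hc'⟩ := (hwh u').mp hwh'
    rw [hc']
    exact (LieSubmodule.lieSpan ℂ g {v}).smul_mem _ hwspan
  · exact ⟨w, hw, (hwh w).mpr ⟨1, (one_smul ℂ w).symm⟩, hwspan⟩
end
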